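/- Let k be a field and A a finite-dimensional k-algebra equipped with a k-bilinear form β : A × A → k that is symmetric (β(x,y) = β(y,x)), associative (β(x·y, z) = β(x, y·z)), and non-degenerate (the k-linear map A → Hom_k(A,k), x ↦ (y ↦ β(y,x)), is bijective). Then A is self-injective, i.e., A is injective as a left module over itself. -/

import Mathlib

/-!
STATEMENT 1: A finite-dimensional algebra `A` over a field `k` carrying a
symmetric, associative, non-degenerate bilinear form `β : A × A → k`
(a symmetric Frobenius algebra) is self-injective: `A` is injective as a left
module over itself.
-/

theorem selfInjective_of_symmetric_frobenius
    {k A : Type} [Field k] [Ring A] [Algebra k A] [FiniteDimensional k A]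
    (β : A →ₗ[k] A →ₗ[k] k)
    (hsymm : ∀ x y : A, β x y = β y x)
    (hassoc : ∀ x y z : A, β (x * y) z = β x (y * z))
    (hnondeg : Function.Bijective fun x : A => β.flip x) :
    Module.Injective A A := by
  apply Module.Baer.injective
  intro I g
  -- restrict scalars of g to k, compose with β(·,1) to get a k-functional on I
  let f : ↥(Submodule.restrictScalars k I) →ₗ[k] k :=
    (β.flip 1) ∘ₗ (g.restrictScalars k) ∘ₗ
      ((Submodule.restrictScalarsEquiv k A A I).restrictScalars k).toLinearMap
  obtain ⟨F, hF⟩ := LinearMap.exists_extend f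
  obtain ⟨c, hc⟩ := hnondeg.2 F
  refine ⟨LinearMap.toSpanSingleton A A c, fun x hx => ?_⟩
  -- goal: x • c = g ⟨x, hx⟩, prove via nondegeneracy
  have key : β.flip (g ⟨x, hx⟩) = β.flip (x * c) := by
    ext y
    have hyx : y * x ∈ I := I.mul_mem_left y hx
    -- β (y) (x*c) = β (y*x) c = F (y*x) = f (y*x) = β (g (y*x)) 1 = β (y * g x) 1 = β y (g x)
    have e1 : β y (x * c) = β (y * x) c := (hassoc y x c).symm
    have e2 : β (y * x) c = F (y * x) := by rw [← hc]; rfl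
    have e3 : F (y * x) = f ⟨y * x, hyx⟩ := by
      have := congrArg (fun h => h (⟨y * x, hyx⟩ : (I : Submodule A A).restrictScalars k)) hF
      exact this
    have e4 : f ⟨y * x, hyx⟩ = β (g ⟨y * x, hyx⟩) 1 := by
      simp [f, hsymm]
      rfl
    have e5 : g ⟨y * x, hyx⟩ = y • g ⟨x, hx⟩ := by
      have : (⟨y * x, hyx⟩ : I) = y • (⟨x, hx⟩ : I) := by ext; simp
      rw [this, map_smul]
    have e6 : β (y * g ⟨x, hx⟩) 1 = β y (g ⟨x, hx⟩) := by
      rw [hassoc, mul_one]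
    simp only [LinearMap.flip_apply]
    rw [e1, e2, e3, e4, e5, smul_eq_mul, e6]
  have := hnondeg.1 key
  simp [LinearMap.toSpanSingleton_apply, smul_eq_mul, this]
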